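/- Let P : U → ℂ be differentiable on an open set U ⊆ ℂ², let λ, μ ∈ ℂ \ {0}, and for a differentiable function w set ψ_w(x,y) = ∂₁w(x,y)x² + ∂₂w(x,y)y² + 2w(x,y)y. Define Q(x,y) := μ⁻¹ P(λx, λy). Then μ⁻¹ ψ_P(λx, λy) = λ·ψ_Q(x,y) wherever defined. Consequently, if s is continuously differentiable, Z solves the midpoint equation s(x,Z(x,y)) + s(y,Z(x,y)) = 0 with s₂(x,Z) + s₂(y,Z) ≠ 0, P(x,y) = s(Z(x,y), y) is the prerenormalization of s, and s satisfies the renormalization fixed point equation s(x,y) = μ⁻¹ P(λx, λy), then μ⁻¹·[s₁(Z,·)δZ + ψ_s(Z,·)](λx, λy) = λ·ψ_s(x,y), where δZ(x,y) = −(ψ_s(x,Z(x,y)) + ψ_s(y,Z(x,y)))/(s₂(x,Z(x,y)) + s₂(y,Z(x,y))); i.e., ψ_s is an eigenvector of the linearized renormalization operator at the fixed point with eigenvalue λ. -/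

import Mathlib

lemma clm_apply_pair (φ : (ℂ × ℂ) →L[ℂ] ℂ) (a b : ℂ) :
    φ (a, b) = a * φ (1, 0) + b * φ (0, 1) := by
  have h : ((a, b) : ℂ × ℂ) = a • ((1, 0) : ℂ × ℂ) + b • ((0, 1) : ℂ × ℂ) := by
    simp [Prod.ext_iff]
  rw [h, map_add, map_smul, map_smul, smul_eq_mul, smul_eq_mul]

lemma part1_aux (lam mu : ℂ) (P Q : ℂ × ℂ → ℂ) (x y : ℂ)
    (hP : DifferentiableAt ℂ P ((lam * x, lam * y) : ℂ × ℂ))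
    (hQ : ∀ p : ℂ × ℂ, Q p = mu⁻¹ * P (lam * p.1, lam * p.2)) :
    mu⁻¹ * (fderiv ℂ P ((lam * x, lam * y) : ℂ × ℂ) (1, 0) * (lam * x) ^ 2
          + fderiv ℂ P ((lam * x, lam * y) : ℂ × ℂ) (0, 1) * (lam * y) ^ 2
          + 2 * P (lam * x, lam * y) * (lam * y))
      = lam * (fderiv ℂ Q ((x, y) : ℂ × ℂ) (1, 0) * x ^ 2
          + fderiv ℂ Q ((x, y) : ℂ × ℂ) (0, 1) * y ^ 2
          + 2 * Q (x, y) * y) := by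
  have hL : HasFDerivAt (fun p : ℂ × ℂ => ((lam * p.1, lam * p.2) : ℂ × ℂ))
      ((lam • ContinuousLinearMap.fst ℂ ℂ ℂ).prod (lam • ContinuousLinearMap.snd ℂ ℂ ℂ)) (x, y) :=
    HasFDerivAt.prodMk ((hasFDerivAt_fst : HasFDerivAt (Prod.fst : ℂ × ℂ → ℂ) (ContinuousLinearMap.fst ℂ ℂ ℂ) (x, y)).const_mul lam)
      ((hasFDerivAt_snd : HasFDerivAt (Prod.snd : ℂ × ℂ → ℂ) (ContinuousLinearMap.snd ℂ ℂ ℂ) (x, y)).const_mul lam)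
  have hQd : HasFDerivAt Q
      (mu⁻¹ • ((fderiv ℂ P ((lam * x, lam * y) : ℂ × ℂ)).comp
        ((lam • ContinuousLinearMap.fst ℂ ℂ ℂ).prod (lam • ContinuousLinearMap.snd ℂ ℂ ℂ)))) (x, y) := by
    have hcomp : HasFDerivAt (fun p : ℂ × ℂ => P (lam * p.1, lam * p.2))
        ((fderiv ℂ P ((lam * x, lam * y) : ℂ × ℂ)).comp
          ((lam • ContinuousLinearMap.fst ℂ ℂ ℂ).prod (lam • ContinuousLinearMap.snd ℂ ℂ ℂ))) (x, y) :=
      (hP.hasFDerivAt).comp (x, y) hL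
    have : Q = fun p : ℂ × ℂ => mu⁻¹ * P (lam * p.1, lam * p.2) := funext hQ
    rw [this]
    exact hcomp.const_mul mu⁻¹
  have hfd : fderiv ℂ Q ((x, y) : ℂ × ℂ) = _ := hQd.fderiv
  rw [hfd, hQ (x, y)]
  simp only [ContinuousLinearMap.coe_smul', Pi.smul_apply, ContinuousLinearMap.coe_comp',
    Function.comp_apply, ContinuousLinearMap.prod_apply, ContinuousLinearMap.coe_fst',
    ContinuousLinearMap.coe_snd', smul_eq_mul, Prod.fst, Prod.snd]
  rw [clm_apply_pair _ (lam * (1,0).1) (lam * (1,0).2), clm_apply_pair _ (lam * (0,1).1) (lam * (0,1).2)]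
  simp only []
  ring

theorem psi_is_eigenvector_of_linearized_renormalization
    (lam mu : ℂ) (hlam : lam ≠ 0) (hmu : mu ≠ 0) :
    (∀ (P Q : ℂ × ℂ → ℂ) (x y : ℂ),
      DifferentiableAt ℂ P ((lam * x, lam * y) : ℂ × ℂ) →
      (∀ p : ℂ × ℂ, Q p = mu⁻¹ * P (lam * p.1, lam * p.2)) →
      mu⁻¹ * (fderiv ℂ P ((lam * x, lam * y) : ℂ × ℂ) (1, 0) * (lam * x) ^ 2
            + fderiv ℂ P ((lam * x, lam * y) : ℂ × ℂ) (0, 1) * (lam * y) ^ 2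
            + 2 * P (lam * x, lam * y) * (lam * y))
        = lam * (fderiv ℂ Q ((x, y) : ℂ × ℂ) (1, 0) * x ^ 2
            + fderiv ℂ Q ((x, y) : ℂ × ℂ) (0, 1) * y ^ 2
            + 2 * Q (x, y) * y)) ∧
    (∀ (U V W : Set (ℂ × ℂ)), IsOpen U → IsOpen V → IsOpen W →
      ∀ (s : ℂ × ℂ → ℂ), ContDiffOn ℂ 1 s U →
      ∀ (Z : ℂ × ℂ → ℂ), DifferentiableOn ℂ Z V →
      (∀ p ∈ V, ((p.1, Z p) : ℂ × ℂ) ∈ U) →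
      (∀ p ∈ V, ((p.2, Z p) : ℂ × ℂ) ∈ U) →
      (∀ p ∈ V, ((Z p, p.2) : ℂ × ℂ) ∈ U) →
      (∀ p ∈ V, s (p.1, Z p) + s (p.2, Z p) = 0) →
      ∀ (s₁ s₂ : ℂ × ℂ → ℂ),
      (∀ q ∈ U, s₁ q = fderiv ℂ s q (1, 0)) →
      (∀ q ∈ U, s₂ q = fderiv ℂ s q (0, 1)) →
      (∀ p ∈ V, s₂ (p.1, Z p) + s₂ (p.2, Z p) ≠ 0) →
      ∀ (ψs : ℂ × ℂ → ℂ),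
      (∀ q ∈ U, ψs q = s₁ q * q.1 ^ 2 + s₂ q * q.2 ^ 2 + 2 * s q * q.2) →
      ∀ (δZ : ℂ × ℂ → ℂ),
      (∀ p ∈ V, δZ p
        = -(ψs (p.1, Z p) + ψs (p.2, Z p)) / (s₂ (p.1, Z p) + s₂ (p.2, Z p))) →
      (∀ p ∈ W, p ∈ U ∧ ((lam * p.1, lam * p.2) : ℂ × ℂ) ∈ V) →
      (∀ p ∈ W, s p = mu⁻¹ * s (Z (lam * p.1, lam * p.2), lam * p.2)) →
      ∀ p ∈ W,
        mu⁻¹ * (s₁ (Z (lam * p.1, lam * p.2), lam * p.2)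
                  * δZ (lam * p.1, lam * p.2)
                + ψs (Z (lam * p.1, lam * p.2), lam * p.2))
          = lam * ψs p) := by
  constructor
  · intro P Q x y hP hQ
    exact part1_aux lam mu P Q x y hP hQ
  · intro U V W hU hV hW s hs Z hZ hxU hyU hZU hmid s₁ s₂ hs₁ hs₂ hD ψs hψ δZ hδ hWin hfix p hp
    obtain ⟨hpU, hqV⟩ := hWin p hp
    set q : ℂ × ℂ := (lam * p.1, lam * p.2) with hq
    have hx'U : ((q.1, Z q) : ℂ × ℂ) ∈ U := hxU q hqV
    have hy'U : ((q.2, Z q) : ℂ × ℂ) ∈ U := hyU q hqV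
    have hZqU : ((Z q, q.2) : ℂ × ℂ) ∈ U := hZU q hqV
    have hsd : ∀ u ∈ U, DifferentiableAt ℂ s u := fun u hu =>
      ((hs.differentiableOn one_ne_zero) u hu).differentiableAt (hU.mem_nhds hu)
    have hZq : DifferentiableAt ℂ Z q := (hZ q hqV).differentiableAt (hV.mem_nhds hqV)
    set dZ := fderiv ℂ Z q with hdZ
    set φx := fderiv ℂ s ((q.1, Z q) : ℂ × ℂ) with hφx
    set φy := fderiv ℂ s ((q.2, Z q) : ℂ × ℂ) with hφy
    set φz := fderiv ℂ s ((Z q, q.2) : ℂ × ℂ) with hφz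
    -- derivative of the midpoint identity
    have h1 : HasFDerivAt (fun v : ℂ × ℂ => s (v.1, Z v))
        (φx.comp ((ContinuousLinearMap.fst ℂ ℂ ℂ).prod dZ)) q :=
      ((hsd _ hx'U).hasFDerivAt).comp q (HasFDerivAt.prodMk hasFDerivAt_fst hZq.hasFDerivAt)
    have h2 : HasFDerivAt (fun v : ℂ × ℂ => s (v.2, Z v))
        (φy.comp ((ContinuousLinearMap.snd ℂ ℂ ℂ).prod dZ)) q :=
      ((hsd _ hy'U).hasFDerivAt).comp q (HasFDerivAt.prodMk hasFDerivAt_snd hZq.hasFDerivAt)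
    have hzero : HasFDerivAt (fun v : ℂ × ℂ => s (v.1, Z v) + s (v.2, Z v))
        (0 : (ℂ × ℂ) →L[ℂ] ℂ) q := by
      refine (hasFDerivAt_const (0 : ℂ) q).congr_of_eventuallyEq ?_
      exact Filter.eventuallyEq_of_mem (hV.mem_nhds hqV) (fun v hv => hmid v hv)
    have hDsum : φx.comp ((ContinuousLinearMap.fst ℂ ℂ ℂ).prod dZ)
        + φy.comp ((ContinuousLinearMap.snd ℂ ℂ ℂ).prod dZ) = 0 := (h1.add h2).unique hzero
    have e1 : φx (1, dZ (1, 0)) + φy (0, dZ (1, 0)) = 0 := by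
      have := ContinuousLinearMap.ext_iff.mp hDsum (1, 0)
      simpa using this
    have e2 : φx (0, dZ (0, 1)) + φy (1, dZ (0, 1)) = 0 := by
      have := ContinuousLinearMap.ext_iff.mp hDsum (0, 1)
      simpa using this
    rw [clm_apply_pair φx 1 (dZ (1, 0)), clm_apply_pair φy 0 (dZ (1, 0))] at e1
    rw [clm_apply_pair φx 0 (dZ (0, 1)), clm_apply_pair φy 1 (dZ (0, 1))] at e2
    have hmq : s (q.1, Z q) + s (q.2, Z q) = 0 := hmid q hqV
    have hD' : fderiv ℂ s ((q.1, Z q) : ℂ × ℂ) (0, 1) + fderiv ℂ s ((q.2, Z q) : ℂ × ℂ) (0, 1) ≠ 0 := by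
      have := hD q hqV
      rwa [hs₂ _ hx'U, hs₂ _ hy'U] at this
    have hδq : δZ q = dZ (1, 0) * q.1 ^ 2 + dZ (0, 1) * q.2 ^ 2 - (Z q) ^ 2 := by
      rw [hδ q hqV, hψ _ hx'U, hψ _ hy'U, hs₁ _ hx'U, hs₁ _ hy'U, hs₂ _ hx'U, hs₂ _ hy'U]
      simp only
      rw [div_eq_iff hD']
      rw [← hφx, ← hφy] at *
      linear_combination (-(q.1 ^ 2)) * e1 - q.2 ^ 2 * e2 - 2 * (Z q) * hmq
    -- derivative of prerenormalization
    have hPd : HasFDerivAt (fun v : ℂ × ℂ => s (Z v, v.2))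
        (φz.comp (dZ.prod (ContinuousLinearMap.snd ℂ ℂ ℂ))) q :=
      ((hsd _ hZqU).hasFDerivAt).comp q (HasFDerivAt.prodMk hZq.hasFDerivAt hasFDerivAt_snd)
    have key := part1_aux lam mu (fun v : ℂ × ℂ => s (Z v, v.2))
      (fun v : ℂ × ℂ => mu⁻¹ * s (Z (lam * v.1, lam * v.2), lam * v.2)) p.1 p.2
      hPd.differentiableAt (fun v => rfl)
    -- rewrite fderiv of P
    have hPfd : fderiv ℂ (fun v : ℂ × ℂ => s (Z v, v.2)) q
        = φz.comp (dZ.prod (ContinuousLinearMap.snd ℂ ℂ ℂ)) := hPd.fderiv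
    have ep1 : fderiv ℂ (fun v : ℂ × ℂ => s (Z v, v.2)) q (1, 0)
        = dZ (1, 0) * φz (1, 0) := by
      rw [hPfd]
      simp only [ContinuousLinearMap.coe_comp', Function.comp_apply,
        ContinuousLinearMap.prod_apply, ContinuousLinearMap.coe_snd']
      rw [clm_apply_pair]
      simp
    have ep2 : fderiv ℂ (fun v : ℂ × ℂ => s (Z v, v.2)) q (0, 1)
        = dZ (0, 1) * φz (1, 0) + φz (0, 1) := by
      rw [hPfd]
      simp only [ContinuousLinearMap.coe_comp', Function.comp_apply,
        ContinuousLinearMap.prod_apply, ContinuousLinearMap.coe_snd']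
      rw [clm_apply_pair]
      simp
    -- rewrite fderiv of Q as fderiv of s at p
    have hQeq : (fun v : ℂ × ℂ => mu⁻¹ * s (Z (lam * v.1, lam * v.2), lam * v.2)) =ᶠ[nhds p] s :=
      Filter.eventuallyEq_of_mem (hW.mem_nhds hp) (fun v hv => (hfix v hv).symm)
    have hQfd : fderiv ℂ (fun v : ℂ × ℂ => mu⁻¹ * s (Z (lam * v.1, lam * v.2), lam * v.2)) p
        = fderiv ℂ s p := hQeq.fderiv_eq
    simp only [Prod.mk.eta] at key
    rw [hQfd] at key
    rw [← hq, ep1, ep2] at key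
    have hQv : mu⁻¹ * s (Z (lam * p.1, lam * p.2), lam * p.2) = s p := (hfix p hp).symm
    rw [← hq] at hQv
    rw [hQv] at key
    -- final assembly
    show mu⁻¹ * (s₁ ((Z q, q.2) : ℂ × ℂ) * δZ q + ψs ((Z q, q.2) : ℂ × ℂ)) = lam * ψs p
    rw [hψ _ hZqU, hψ _ hpU, hs₁ _ hZqU, hs₂ _ hZqU, hs₁ _ hpU, hs₂ _ hpU, hδq]
    simp only [← hφz]
    have hq1 : q.1 = lam * p.1 := rfl
    have hq2 : q.2 = lam * p.2 := rfl
    rw [hq1, hq2] at *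
    linear_combination key
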